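/- Let k and k̃ be integers with 2 ≤ k < k̃. Then there is no ℂ-algebra isomorphism from ℂ[x,y]/(x⁴, y·(y + x)·(y + k̃·x)) to ℂ[x,y]/(x⁴, y·(y + x)·(y + k·x)) mapping the ℂ-span of the classes of x and y onto the ℂ-span of the classes of x and y. In particular, these rings for k = 2, 3, 4, … are pairwise non-isomorphic in this sense. -/

import Mathlib

noncomputable section

open MvPolynomial

/-- The relations ideal for `ℂ[x,y]/(x⁴, (y+l₁·x)(y+l₂·x)(y+l₃·x))`. -/
def Crel (l : Fin 3 → ℤ) : Ideal (MvPolynomial (Fin 2) ℂ) :=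
  Ideal.span {X 0 ^ 4, ∏ i : Fin 3, (X 1 + (l i : ℂ) • X 0)}

/-- `CR l = ℂ[x,y]/(x⁴, (y+l₁·x)(y+l₂·x)(y+l₃·x))`. -/
abbrev CR (l : Fin 3 → ℤ) := MvPolynomial (Fin 2) ℂ ⧸ Crel l

/-- The class of `x` in `CR l`. -/
def cx (l : Fin 3 → ℤ) : CR l := Ideal.Quotient.mk (Crel l) (X 0)

/-- The class of `y` in `CR l`. -/
def cy (l : Fin 3 → ℤ) : CR l := Ideal.Quotient.mk (Crel l) (X 1)

/-- The `ℂ`-span of the classes of `x` and `y` (the degree-2 part). -/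
def cdeg2 (l : Fin 3 → ℤ) : Submodule ℂ (CR l) := Submodule.span ℂ {cx l, cy l}




/-- Coefficient extraction for short polynomials. -/
lemma coeffs_zero_of_sum_eq_zero {R : Type*} [CommRing R] {n : ℕ} (r : Fin n → R)
    (h : ∑ j : Fin n, Polynomial.C (r j) * Polynomial.X ^ (j : ℕ) = 0) : ∀ j, r j = 0 := by
  intro j
  have := congrArg (fun p => Polynomial.coeff p (j : ℕ)) h
  simp only [Polynomial.finset_sum_coeff, Polynomial.coeff_C_mul, Polynomial.coeff_X_pow,
    Polynomial.coeff_zero] at this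
  rw [Finset.sum_eq_single j] at this
  · simpa using this
  · intro i _ hij
    simp [Fin.val_ne_of_ne (Ne.symm hij)]
  · simp

lemma sum_eq_zero_of_mk {R : Type*} [CommRing R] [Nontrivial R] {n : ℕ} (r : Fin n → R)
    {g : Polynomial R} (hm : g.Monic) (hg : g.degree = (n : ℕ))
    (h : AdjoinRoot.mk g (∑ j : Fin n, Polynomial.C (r j) * Polynomial.X ^ (j : ℕ)) = 0) :
    ∀ j, r j = 0 := by
  have hdlt : (∑ j : Fin n, Polynomial.C (r j) * Polynomial.X ^ (j : ℕ)).degree < g.degree := by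
    rw [hg]
    refine lt_of_le_of_lt (Polynomial.degree_sum_le _ _) ?_
    rcases Nat.eq_zero_or_pos n with hn | hn
    · subst hn; simp
    rw [Finset.sup_lt_iff (by exact_mod_cast WithBot.bot_lt_coe n)]
    intro i _
    refine lt_of_le_of_lt (Polynomial.degree_C_mul_X_pow_le _ _) ?_
    exact_mod_cast Nat.cast_lt.mpr i.isLt
  have h2 := congrArg (AdjoinRoot.modByMonicHom hm) h
  rw [AdjoinRoot.modByMonicHom_mk, map_zero,
    (Polynomial.modByMonic_eq_self_iff hm).mpr hdlt] at h2
  exact coeffs_zero_of_sum_eq_zero r h2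

abbrev R4 : Type := AdjoinRoot ((Polynomial.X : Polynomial ℂ) ^ 4)

instance : Nontrivial R4 :=
  AdjoinRoot.nontrivial _ (by rw [Polynomial.degree_X_pow]; norm_num)

def e4 : R4 := AdjoinRoot.root _

lemma e4_pow : e4 ^ 4 = 0 := by
  rw [e4, ← AdjoinRoot.mk_X, ← map_pow, AdjoinRoot.mk_self]

lemma indepR4 (w : Fin 4 → ℂ) (h : ∑ i : Fin 4, w i • e4 ^ (i : ℕ) = 0) :
    ∀ i, w i = 0 := by
  have key : AdjoinRoot.mk ((Polynomial.X : Polynomial ℂ) ^ 4)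
      (∑ i : Fin 4, Polynomial.C (w i) * Polynomial.X ^ (i : ℕ)) = 0 := by
    rw [map_sum, ← h]
    congr 1
    ext i
    rw [map_mul, map_pow, AdjoinRoot.mk_X, AdjoinRoot.mk_C, Algebra.smul_def, e4,
      AdjoinRoot.algebraMap_eq]
  exact sum_eq_zero_of_mk w (Polynomial.monic_X_pow 4) (Polynomial.degree_X_pow 4) key

def gp (m : ℂ) : Polynomial R4 :=
  Polynomial.X * (Polynomial.X + Polynomial.C e4) *
    (Polynomial.X + Polynomial.C (algebraMap ℂ R4 m * e4))

lemma gp_monic (m : ℂ) : (gp m).Monic :=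
  (Polynomial.monic_X.mul (Polynomial.monic_X_add_C _)).mul (Polynomial.monic_X_add_C _)

lemma gp_degree (m : ℂ) : (gp m).degree = 3 := by
  rw [gp, (Polynomial.monic_X_add_C _).degree_mul, (Polynomial.monic_X_add_C _).degree_mul,
    Polynomial.degree_X, Polynomial.degree_X_add_C, Polynomial.degree_X_add_C]
  rfl

abbrev Sm (m : ℂ) := AdjoinRoot (gp m)

def eE (m : ℂ) : Sm m := algebraMap R4 _ e4
def hH (m : ℂ) : Sm m := AdjoinRoot.root _

lemma rel1 (m : ℂ) : eE m ^ 4 = 0 := by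
  rw [eE, ← map_pow, e4_pow, map_zero]

lemma algebraMapCS (m : ℂ) (z : ℂ) :
    algebraMap ℂ (Sm m) z = algebraMap R4 (Sm m) (algebraMap ℂ R4 z) :=
  IsScalarTower.algebraMap_apply ℂ R4 (Sm m) z

lemma rel2 (m : ℂ) :
    hH m * (hH m + eE m) * (hH m + algebraMap ℂ (Sm m) m * eE m) = 0 := by
  have h := AdjoinRoot.mk_self (f := gp m)
  rw [gp] at h
  simp only [map_mul, map_add, AdjoinRoot.mk_X, AdjoinRoot.mk_C] at h
  rw [hH, eE, algebraMapCS, AdjoinRoot.algebraMap_eq]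
  exact h

lemma indepS (m : ℂ) (w : Fin 4 → Fin 3 → ℂ)
    (h : ∑ j : Fin 3, ∑ i : Fin 4, w i j • (eE m ^ (i : ℕ) * hH m ^ (j : ℕ)) = 0) :
    ∀ i j, w i j = 0 := by
  have key : AdjoinRoot.mk (gp m)
      (∑ j : Fin 3, Polynomial.C (∑ i : Fin 4, w i j • e4 ^ (i : ℕ)) *
        Polynomial.X ^ (j : ℕ)) = 0 := by
    rw [map_sum, ← h]
    congr 1
    ext j
    rw [map_mul, map_pow, AdjoinRoot.mk_X, AdjoinRoot.mk_C, ← AdjoinRoot.algebraMap_eq,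
      map_sum, Finset.sum_mul]
    congr 1
    ext i
    rw [Algebra.smul_def, map_mul, map_pow, ← algebraMapCS, ← Algebra.smul_def,
      smul_mul_assoc, eE, hH]
  have hr := sum_eq_zero_of_mk _ (gp_monic m) (gp_degree m) key
  intro i j
  exact indepR4 (fun i => w i j) (hr j) i

def ψ (n : ℤ) : MvPolynomial (Fin 2) ℂ →ₐ[ℂ] Sm (n : ℂ) :=
  MvPolynomial.aeval ![eE (n : ℂ), hH (n : ℂ)]

lemma ψ_X0 (n : ℤ) : ψ n (X 0) = eE (n : ℂ) := by simp [ψ]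
lemma ψ_X1 (n : ℤ) : ψ n (X 1) = hH (n : ℂ) := by simp [ψ]

lemma ψ_ker (n : ℤ) : Crel ![0, 1, n] ≤ RingHom.ker (ψ n : MvPolynomial (Fin 2) ℂ →+* Sm (n : ℂ)) := by
  rw [Crel, Ideal.span_le]
  rintro p (rfl | rfl)
  · simp only [SetLike.mem_coe, RingHom.mem_ker, RingHom.coe_coe, map_pow]
    rw [ψ_X0, rel1]
  · simp only [SetLike.mem_coe, RingHom.mem_ker, map_prod, Fin.prod_univ_three]
    simp only [Matrix.cons_val_zero, Matrix.cons_val_one, Matrix.head_cons, Matrix.cons_val_two,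
      Matrix.tail_cons, MvPolynomial.smul_eq_C_mul, RingHom.coe_coe, map_add, map_mul]
    push_cast
    simp only [map_zero, map_one, ψ, MvPolynomial.aeval_C, MvPolynomial.aeval_X,
      Matrix.cons_val_zero, Matrix.cons_val_one, Matrix.head_cons]
    rw [zero_mul, add_zero, one_mul]
    exact rel2 (n : ℂ)

def ψq (n : ℤ) : CR ![0, 1, n] →ₐ[ℂ] Sm (n : ℂ) :=
  Ideal.Quotient.liftₐ _ (ψ n) (fun a ha => ψ_ker n ha)

lemma ψq_cx (n : ℤ) : ψq n (cx ![0, 1, n]) = eE (n : ℂ) := by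
  simp [cx, ψq, ψ, Ideal.Quotient.liftₐ_apply]
  exact ψ_X0 n

lemma ψq_cy (n : ℤ) : ψq n (cy ![0, 1, n]) = hH (n : ℂ) := by
  simp [cy, ψq, ψ, Ideal.Quotient.liftₐ_apply]
  exact ψ_X1 n

lemma indepS' (m : ℂ) (w : Fin 4 → Fin 3 → ℂ)
    (h : ∑ j : Fin 3, ∑ i : Fin 4,
      algebraMap ℂ (Sm m) (w i j) * (eE m ^ (i : ℕ) * hH m ^ (j : ℕ)) = 0) :
    ∀ i j, w i j = 0 := by
  refine indepS m w ?_
  simpa only [Algebra.smul_def] using h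

lemma fin40 : ((0 : Fin 4) : ℕ) = 0 := rfl
lemma fin41 : ((1 : Fin 4) : ℕ) = 1 := rfl
lemma fin42 : ((2 : Fin 4) : ℕ) = 2 := rfl
lemma fin43 : ((3 : Fin 4) : ℕ) = 3 := rfl
lemma fin30 : ((0 : Fin 3) : ℕ) = 0 := rfl
lemma fin31 : ((1 : Fin 3) : ℕ) = 1 := rfl
lemma fin32 : ((2 : Fin 3) : ℕ) = 2 := rfl

lemma cast_mul_ne (n : ℤ) (hn : n ≠ 0) {d : ℂ} (hd : d ≠ 0) : ((n : ℂ) * d) ≠ 0 :=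
  mul_ne_zero (Int.cast_ne_zero.mpr hn) hd

lemma triple {x d K : ℂ} (h : x * (x - d) * (x - K * d) = 0) :
    x = 0 ∨ x = d ∨ x = K * d := by
  rcases mul_eq_zero.mp h with h' | h'
  · rcases mul_eq_zero.mp h' with h'' | h''
    · exact Or.inl h''
    · exact Or.inr (Or.inl (sub_eq_zero.mp h''))
  · exact Or.inr (Or.inr (sub_eq_zero.mp h'))

lemma endgame (k kt : ℤ) (hk : 2 ≤ k) (hkkt : k < kt) (a c d : ℂ)
    (ha : a ≠ 0) (hd : d ≠ 0)
    (h1 : c * (c - d) * (c - (k:ℂ) * d) = 0)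
    (h2 : (c + a) * ((c + a) - d) * ((c + a) - (k:ℂ) * d) = 0)
    (h3 : (c + (kt:ℂ) * a) * ((c + (kt:ℂ) * a) - d) * ((c + (kt:ℂ) * a) - (k:ℂ) * d) = 0) :
    False := by
  rcases triple h1 with hc1 | hc1 | hc1 <;> rcases triple h2 with hc2 | hc2 | hc2 <;>
    rcases triple h3 with hc3 | hc3 | hc3
  · exact ha (by linear_combination hc2 - hc1)
  · exact ha (by linear_combination hc2 - hc1)
  · exact ha (by linear_combination hc2 - hc1)
  · refine cast_mul_ne (kt*(1-0) - (0-0)) (by nlinarith) hd ?_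
    push_cast
    linear_combination (kt:ℂ)*hc1 - (kt:ℂ)*hc2 + hc3 - hc1
  · refine cast_mul_ne (kt*(1-0) - (1-0)) (by nlinarith) hd ?_
    push_cast
    linear_combination (kt:ℂ)*hc1 - (kt:ℂ)*hc2 + hc3 - hc1
  · refine cast_mul_ne (kt*(1-0) - (k-0)) (by nlinarith) hd ?_
    push_cast
    linear_combination (kt:ℂ)*hc1 - (kt:ℂ)*hc2 + hc3 - hc1
  · refine cast_mul_ne (kt*(k-0) - (0-0)) (by nlinarith) hd ?_
    push_cast
    linear_combination (kt:ℂ)*hc1 - (kt:ℂ)*hc2 + hc3 - hc1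
  · refine cast_mul_ne (kt*(k-0) - (1-0)) (by nlinarith) hd ?_
    push_cast
    linear_combination (kt:ℂ)*hc1 - (kt:ℂ)*hc2 + hc3 - hc1
  · refine cast_mul_ne (kt*(k-0) - (k-0)) (by nlinarith) hd ?_
    push_cast
    linear_combination (kt:ℂ)*hc1 - (kt:ℂ)*hc2 + hc3 - hc1
  · refine cast_mul_ne (kt*(0-1) - (0-1)) (by nlinarith) hd ?_
    push_cast
    linear_combination (kt:ℂ)*hc1 - (kt:ℂ)*hc2 + hc3 - hc1
  · refine cast_mul_ne (kt*(0-1) - (1-1)) (by nlinarith) hd ?_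
    push_cast
    linear_combination (kt:ℂ)*hc1 - (kt:ℂ)*hc2 + hc3 - hc1
  · refine cast_mul_ne (kt*(0-1) - (k-1)) (by nlinarith) hd ?_
    push_cast
    linear_combination (kt:ℂ)*hc1 - (kt:ℂ)*hc2 + hc3 - hc1
  · exact ha (by linear_combination hc2 - hc1)
  · exact ha (by linear_combination hc2 - hc1)
  · exact ha (by linear_combination hc2 - hc1)
  · refine cast_mul_ne (kt*(k-1) - (0-1)) (by nlinarith) hd ?_
    push_cast
    linear_combination (kt:ℂ)*hc1 - (kt:ℂ)*hc2 + hc3 - hc1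
  · refine cast_mul_ne (kt*(k-1) - (1-1)) (by nlinarith) hd ?_
    push_cast
    linear_combination (kt:ℂ)*hc1 - (kt:ℂ)*hc2 + hc3 - hc1
  · refine cast_mul_ne (kt*(k-1) - (k-1)) (by nlinarith) hd ?_
    push_cast
    linear_combination (kt:ℂ)*hc1 - (kt:ℂ)*hc2 + hc3 - hc1
  · refine cast_mul_ne (kt*(0-k) - (0-k)) (by nlinarith) hd ?_
    push_cast
    linear_combination (kt:ℂ)*hc1 - (kt:ℂ)*hc2 + hc3 - hc1
  · refine cast_mul_ne (kt*(0-k) - (1-k)) (by nlinarith) hd ?_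
    push_cast
    linear_combination (kt:ℂ)*hc1 - (kt:ℂ)*hc2 + hc3 - hc1
  · refine cast_mul_ne (kt*(0-k) - (k-k)) (by nlinarith) hd ?_
    push_cast
    linear_combination (kt:ℂ)*hc1 - (kt:ℂ)*hc2 + hc3 - hc1
  · refine cast_mul_ne (kt*(1-k) - (0-k)) (by nlinarith) hd ?_
    push_cast
    linear_combination (kt:ℂ)*hc1 - (kt:ℂ)*hc2 + hc3 - hc1
  · refine cast_mul_ne (kt*(1-k) - (1-k)) (by nlinarith) hd ?_
    push_cast
    linear_combination (kt:ℂ)*hc1 - (kt:ℂ)*hc2 + hc3 - hc1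
  · refine cast_mul_ne (kt*(1-k) - (k-k)) (by nlinarith) hd ?_
    push_cast
    linear_combination (kt:ℂ)*hc1 - (kt:ℂ)*hc2 + hc3 - hc1
  · exact ha (by linear_combination hc2 - hc1)
  · exact ha (by linear_combination hc2 - hc1)
  · exact ha (by linear_combination hc2 - hc1)

lemma cx_pow4 (l : Fin 3 → ℤ) : (cx l) ^ 4 = 0 := by
  rw [cx, ← map_pow, Ideal.Quotient.eq_zero_iff_mem]
  exact Ideal.subset_span (Set.mem_insert _ _)

lemma cubic_zero (n : ℤ) :
    cy ![0,1,n] * (cy ![0,1,n] + cx ![0,1,n]) * (cy ![0,1,n] + (n : ℂ) • cx ![0,1,n]) = 0 := by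
  have hmem : (∏ i : Fin 3, (X 1 + ((![0,1,n] : Fin 3 → ℤ) i : ℂ) • X 0)) ∈ Crel ![0,1,n] :=
    Ideal.subset_span (Set.mem_insert_of_mem _ rfl)
  have hsm : (n : ℂ) • cx ![0,1,n] = Ideal.Quotient.mk (Crel ![0,1,n]) ((n:ℂ) • X 0) := by
    rw [cx]
    exact (map_smul (Ideal.Quotient.mkₐ ℂ (Crel ![0,1,n])) ((n:ℂ)) (X 0)).symm
  rw [hsm, cx, cy, ← map_add, ← map_add, ← map_mul, ← map_mul,
    Ideal.Quotient.eq_zero_iff_mem]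
  convert hmem using 2
  rw [Fin.prod_univ_three]
  simp only [Matrix.cons_val_zero, Matrix.cons_val_one, Matrix.head_cons, Matrix.cons_val_two,
    Matrix.tail_cons]
  push_cast
  rw [zero_smul, add_zero, one_smul]

set_option maxHeartbeats 2000000 in
/-- For integers `2 ≤ k < k̃` there is no `ℂ`-algebra isomorphism from
`ℂ[x,y]/(x⁴, y(y+x)(y+k̃·x))` to `ℂ[x,y]/(x⁴, y(y+x)(y+k·x))` mapping the span of
`x, y` onto the span of `x, y`. -/
theorem stmt14 (k kt : ℤ) (hk : 2 ≤ k) (hkkt : k < kt) :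
    ¬ ∃ φ : CR ![0, 1, kt] ≃ₐ[ℂ] CR ![0, 1, k],
        Submodule.map φ.toLinearMap (cdeg2 ![0, 1, kt]) = cdeg2 ![0, 1, k] := by
  rintro ⟨φ, hφ⟩
  have hx2 : cx ![0,1,kt] ∈ cdeg2 ![0,1,kt] := Submodule.subset_span (Set.mem_insert _ _)
  have hy2 : cy ![0,1,kt] ∈ cdeg2 ![0,1,kt] :=
    Submodule.subset_span (Set.mem_insert_of_mem _ rfl)
  have hφx : φ (cx ![0,1,kt]) ∈ cdeg2 ![0,1,k] := by
    rw [← hφ]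
    exact Submodule.mem_map_of_mem hx2
  have hφy : φ (cy ![0,1,kt]) ∈ cdeg2 ![0,1,k] := by
    rw [← hφ]
    exact Submodule.mem_map_of_mem hy2
  rw [cdeg2, Submodule.mem_span_pair] at hφx hφy
  obtain ⟨a, b, hab⟩ := hφx
  obtain ⟨c, d, hcd⟩ := hφy
  -- abbreviations
  set e : Sm (k:ℂ) := eE (k:ℂ) with he
  set h : Sm (k:ℂ) := hH (k:ℂ) with hh
  have r1 : e ^ 4 = 0 := rel1 _
  have r2 : h * (h + e) * (h + algebraMap ℂ _ (k:ℂ) * e) = 0 := rel2 _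
  -- E1 : fourth power of φ x  vanishes
  have e1 : (a • cx ![0,1,k] + b • cy ![0,1,k]) ^ 4 = 0 := by
    rw [hab, ← map_pow, cx_pow4, map_zero]
  have E1 : (algebraMap ℂ (Sm (k:ℂ)) a * e + algebraMap ℂ (Sm (k:ℂ)) b * h) ^ 4 = 0 := by
    simpa only [map_add, map_pow, map_smul, map_zero, ψq_cx, ψq_cy, Algebra.smul_def]
      using congrArg (ψq k) e1
  -- normal form of E1
  have hcomb : algebraMap ℂ (Sm (k:ℂ)) (4*a^3*b - 4*(k:ℂ)*a*b^3 + (k:ℂ)*((k:ℂ)+1)*b^4) * (e^3*h)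
      + algebraMap ℂ (Sm (k:ℂ)) (6*a^2*b^2 - 4*((k:ℂ)+1)*a*b^3 + ((k:ℂ)^2+(k:ℂ)+1)*b^4) * (e^2*h^2) = 0 := by
    simp only [map_add, map_sub, map_mul, map_pow, map_one, map_ofNat]
    linear_combination E1 - (algebraMap ℂ (Sm (k:ℂ)) a)^4 * r1
      - (4*(algebraMap ℂ (Sm (k:ℂ)) a)*(algebraMap ℂ (Sm (k:ℂ)) b)^3*e
         + (algebraMap ℂ (Sm (k:ℂ)) b)^4*h
         - (1 + algebraMap ℂ (Sm (k:ℂ)) ((k:ℤ):ℂ))*(algebraMap ℂ (Sm (k:ℂ)) b)^4*e) * r2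
  have hind := indepS' (k:ℂ)
    ![![0,0,0],![0,0,0],![0,0,(6*a^2*b^2 - 4*((k:ℂ)+1)*a*b^3 + ((k:ℂ)^2+(k:ℂ)+1)*b^4)],
      ![0,(4*a^3*b - 4*(k:ℂ)*a*b^3 + (k:ℂ)*((k:ℂ)+1)*b^4),0]]
    (by
      simp only [Fin.sum_univ_three, Fin.sum_univ_four, Matrix.cons_val_zero, Matrix.cons_val_one,
        Matrix.head_cons, Matrix.cons_val_two, Matrix.tail_cons, Matrix.cons_val_three,
        Matrix.head_fin_const, fin40, fin41, fin42, fin43, fin30, fin31, fin32,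
        map_zero, zero_mul, add_zero, zero_add, pow_zero, pow_one, one_mul,
        mul_one]
      linear_combination hcomb)
  have hP1 : 4*a^3*b - 4*(k:ℂ)*a*b^3 + (k:ℂ)*((k:ℂ)+1)*b^4 = 0 := by simpa using hind 3 1
  have hP2 : 6*a^2*b^2 - 4*((k:ℂ)+1)*a*b^3 + ((k:ℂ)^2+(k:ℂ)+1)*b^4 = 0 := by simpa using hind 2 2
  -- b = 0
  have hb : b = 0 := by
    have hLB : 10*((k:ℂ)^2-(k:ℂ)+1)*a*b^4 - ((k:ℂ)+1)*(4*(k:ℂ)^2-5*(k:ℂ)+4)*b^5 = 0 := by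
      linear_combination 9*b*hP1 - (6*a+4*((k:ℂ)+1)*b)*hP2
    have hres : ((6*((k+1)*(4*k^2-5*k+4))^2 - 4*(k+1)*(10*(k^2-k+1))*((k+1)*(4*k^2-5*k+4))
        + (k^2+k+1)*(10*(k^2-k+1))^2 : ℤ) : ℂ) * b^10 = 0 := by
      push_cast
      linear_combination (10*((k:ℂ)^2-(k:ℂ)+1))^2*b^6*hP2
        - (6*(10*((k:ℂ)^2-(k:ℂ)+1)*a*b^4 - ((k:ℂ)+1)*(4*(k:ℂ)^2-5*(k:ℂ)+4)*b^5)
           + (12*(((k:ℂ)+1)*(4*(k:ℂ)^2-5*(k:ℂ)+4)) - 4*((k:ℂ)+1)*(10*((k:ℂ)^2-(k:ℂ)+1)))*b^5)*hLB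
    have hpos : 0 < (6*((k+1)*(4*k^2-5*k+4))^2 - 4*(k+1)*(10*(k^2-k+1))*((k+1)*(4*k^2-5*k+4))
        + (k^2+k+1)*(10*(k^2-k+1))^2 : ℤ) := by
      nlinarith [sq_nonneg (3*((k+1)*(4*k^2-5*k+4)) - (k+1)*(10*(k^2-k+1))),
        sq_nonneg (10*(k^2-k+1)), sq_nonneg (k-1), sq_nonneg k, hk]
    have hb10 := (mul_eq_zero.mp hres).resolve_left (Int.cast_ne_zero.mpr hpos.ne')
    exact pow_eq_zero_iff (by norm_num) |>.mp hb10
  rw [hb, zero_smul, add_zero] at hab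
  -- d ≠ 0
  have hyim : cy ![0,1,k] ∈ Submodule.map φ.toLinearMap (cdeg2 ![0,1,kt]) := by
    rw [hφ]; exact Submodule.subset_span (Set.mem_insert_of_mem _ rfl)
  obtain ⟨z, hz, hzy⟩ := Submodule.mem_map.mp hyim
  rw [cdeg2, Submodule.mem_span_pair] at hz
  obtain ⟨u, v, huv⟩ := hz
  have hyq : u • (a • cx ![0,1,k]) + v • (c • cx ![0,1,k] + d • cy ![0,1,k]) = cy ![0,1,k] := by
    rw [hab, hcd, ← map_smul φ, ← map_smul φ, ← map_add φ, huv,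
      ← AlgEquiv.toLinearMap_apply, hzy]
  have hyS : algebraMap ℂ (Sm (k:ℂ)) u * (algebraMap ℂ (Sm (k:ℂ)) a * e)
      + algebraMap ℂ (Sm (k:ℂ)) v * (algebraMap ℂ (Sm (k:ℂ)) c * e
        + algebraMap ℂ (Sm (k:ℂ)) d * h) = h := by
    simpa only [map_add, map_smul, ψq_cx, ψq_cy, Algebra.smul_def, map_mul]
      using congrArg (ψq k) hyq
  have hind2 := indepS' (k:ℂ) ![![0, v*d - 1, 0],![u*a+v*c,0,0],![0,0,0],![0,0,0]]
    (by
      simp only [Fin.sum_univ_three, Fin.sum_univ_four, Matrix.cons_val_zero, Matrix.cons_val_one,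
        Matrix.head_cons, Matrix.cons_val_two, Matrix.tail_cons, Matrix.cons_val_three,
        Matrix.head_fin_const, fin40, fin41, fin42, fin43, fin30, fin31, fin32,
        map_zero, zero_mul, add_zero, zero_add, pow_zero, pow_one, one_mul,
        mul_one, map_sub, map_add, map_mul, map_one]
      linear_combination hyS)
  have hvd : v*d - 1 = 0 := by simpa using hind2 0 1
  have hd : d ≠ 0 := by
    intro h0
    rw [h0, mul_zero] at hvd
    norm_num at hvd
  -- a ≠ 0
  have hxim : cx ![0,1,k] ∈ Submodule.map φ.toLinearMap (cdeg2 ![0,1,kt]) := by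
    rw [hφ]; exact Submodule.subset_span (Set.mem_insert _ _)
  obtain ⟨z', hz', hzx⟩ := Submodule.mem_map.mp hxim
  rw [cdeg2, Submodule.mem_span_pair] at hz'
  obtain ⟨u', v', huv'⟩ := hz'
  have hxq : u' • (a • cx ![0,1,k]) + v' • (c • cx ![0,1,k] + d • cy ![0,1,k]) = cx ![0,1,k] := by
    rw [hab, hcd, ← map_smul φ, ← map_smul φ, ← map_add φ, huv',
      ← AlgEquiv.toLinearMap_apply, hzx]
  have hxS : algebraMap ℂ (Sm (k:ℂ)) u' * (algebraMap ℂ (Sm (k:ℂ)) a * e)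
      + algebraMap ℂ (Sm (k:ℂ)) v' * (algebraMap ℂ (Sm (k:ℂ)) c * e
        + algebraMap ℂ (Sm (k:ℂ)) d * h) = e := by
    simpa only [map_add, map_smul, ψq_cx, ψq_cy, Algebra.smul_def, map_mul]
      using congrArg (ψq k) hxq
  have hind3 := indepS' (k:ℂ) ![![0, v'*d, 0],![u'*a+v'*c - 1,0,0],![0,0,0],![0,0,0]]
    (by
      simp only [Fin.sum_univ_three, Fin.sum_univ_four, Matrix.cons_val_zero, Matrix.cons_val_one,
        Matrix.head_cons, Matrix.cons_val_two, Matrix.tail_cons, Matrix.cons_val_three,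
        Matrix.head_fin_const, fin40, fin41, fin42, fin43, fin30, fin31, fin32,
        map_zero, zero_mul, add_zero, zero_add, pow_zero, pow_one, one_mul,
        mul_one, map_sub, map_add, map_mul, map_one]
      linear_combination hxS)
  have hv'd : v'*d = 0 := by simpa using hind3 0 1
  have hua : u'*a + v'*c - 1 = 0 := by simpa using hind3 1 0
  have ha : a ≠ 0 := by
    intro h0
    have hv' : v' = 0 := (mul_eq_zero.mp hv'd).resolve_right hd
    rw [h0, hv', mul_zero, zero_mul, add_zero] at hua
    norm_num at hua
  -- E2
  have e2 : (c • cx ![0,1,k] + d • cy ![0,1,k]) * ((c • cx ![0,1,k] + d • cy ![0,1,k]) + a • cx ![0,1,k])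
      * ((c • cx ![0,1,k] + d • cy ![0,1,k]) + (kt:ℂ) • (a • cx ![0,1,k])) = 0 := by
    rw [hab, hcd, ← map_smul φ, ← map_add φ, ← map_add φ, ← map_mul φ, ← map_mul φ,
      cubic_zero kt, map_zero]
  have hS2 : (algebraMap ℂ (Sm (k:ℂ)) c * e + algebraMap ℂ (Sm (k:ℂ)) d * h)
      * ((algebraMap ℂ (Sm (k:ℂ)) c * e + algebraMap ℂ (Sm (k:ℂ)) d * h) + algebraMap ℂ (Sm (k:ℂ)) a * e)
      * ((algebraMap ℂ (Sm (k:ℂ)) c * e + algebraMap ℂ (Sm (k:ℂ)) d * h)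
         + algebraMap ℂ (Sm (k:ℂ)) ((kt:ℤ):ℂ) * (algebraMap ℂ (Sm (k:ℂ)) a * e)) = 0 := by
    simpa only [map_add, map_mul, map_smul, map_zero, ψq_cx, ψq_cy, Algebra.smul_def]
      using congrArg (ψq k) e2
  have hcomb2 : algebraMap ℂ (Sm (k:ℂ)) (c*(c+a)*(c+(kt:ℂ)*a)) * (e^3)
      + algebraMap ℂ (Sm (k:ℂ)) ((3*c^2 + 2*(1+(kt:ℂ))*a*c + (kt:ℂ)*a^2)*d - (k:ℂ)*d^3) * (e^2*h)
      + algebraMap ℂ (Sm (k:ℂ)) ((3*c + (1+(kt:ℂ))*a)*d^2 - (1+(k:ℂ))*d^3) * (e*h^2) = 0 := by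
    simp only [map_add, map_sub, map_mul, map_pow, map_one, map_ofNat]
    linear_combination hS2 - (algebraMap ℂ (Sm (k:ℂ)) d)^3 * r2
  have hind4 := indepS' (k:ℂ)
    ![![0,0,0],![0,0,((3*c + (1+(kt:ℂ))*a)*d^2 - (1+(k:ℂ))*d^3)],
      ![0,((3*c^2 + 2*(1+(kt:ℂ))*a*c + (kt:ℂ)*a^2)*d - (k:ℂ)*d^3),0],
      ![(c*(c+a)*(c+(kt:ℂ)*a)),0,0]]
    (by
      simp only [Fin.sum_univ_three, Fin.sum_univ_four, Matrix.cons_val_zero, Matrix.cons_val_one,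
        Matrix.head_cons, Matrix.cons_val_two, Matrix.tail_cons, Matrix.cons_val_three,
        Matrix.head_fin_const, fin40, fin41, fin42, fin43, fin30, fin31, fin32,
        map_zero, zero_mul, add_zero, zero_add, pow_zero, pow_one, one_mul,
        mul_one]
      linear_combination hcomb2)
  have hR0 : c*(c+a)*(c+(kt:ℂ)*a) = 0 := by simpa using hind4 3 0
  have hR1 : (3*c^2 + 2*(1+(kt:ℂ))*a*c + (kt:ℂ)*a^2)*d - (k:ℂ)*d^3 = 0 := by simpa using hind4 2 1
  have hR2 : (3*c + (1+(kt:ℂ))*a)*d^2 - (1+(k:ℂ))*d^3 = 0 := by simpa using hind4 1 2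
  -- symmetric function equations
  have hσ1 : 3*c + (1+(kt:ℂ))*a - (1+(k:ℂ))*d = 0 := by
    have h' : d^2 * (3*c + (1+(kt:ℂ))*a - (1+(k:ℂ))*d) = 0 := by linear_combination hR2
    exact (mul_eq_zero.mp h').resolve_left (pow_ne_zero 2 hd)
  have hσ2 : 3*c^2 + 2*(1+(kt:ℂ))*a*c + (kt:ℂ)*a^2 - (k:ℂ)*d^2 = 0 := by
    have h' : d * (3*c^2 + 2*(1+(kt:ℂ))*a*c + (kt:ℂ)*a^2 - (k:ℂ)*d^2) = 0 := by
      linear_combination hR1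
    exact (mul_eq_zero.mp h').resolve_left hd
  have h1 : c * (c - d) * (c - (k:ℂ)*d) = 0 := by
    linear_combination hR0 + c^2*hσ1 - c*hσ2
  have h2 : (c+a) * ((c+a) - d) * ((c+a) - (k:ℂ)*d) = 0 := by
    linear_combination hR0 + (c+a)^2*hσ1 - (c+a)*hσ2
  have h3 : (c+(kt:ℂ)*a) * ((c+(kt:ℂ)*a) - d) * ((c+(kt:ℂ)*a) - (k:ℂ)*d) = 0 := by
    linear_combination hR0 + (c+(kt:ℂ)*a)^2*hσ1 - (c+(kt:ℂ)*a)*hσ2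
  exact endgame k kt hk hkkt a c d ha hd h1 h2 h3
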